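/- arXiv:0707.3729 — 2 statements merged into one kernel-verified Lean document; each statement's English description precedes it below -/
import Mathlib

section
/- Let C be a bounded measurable subset of ℝᵈ, γ ∈ (1,2), and a > 0 such that C ⊆ aB, where B is the open unit ball of ℝᵈ centered at the origin. Then K_{γ,aB}(e₁) < ∞ for a unit vector e₁ ∈ ℝᵈ, and K_{γ,C}(x) ≤ K_{γ,aB}(e₁) · |x|^{−(γ−1)d} for every x ≠ 0. Consequently, if φ is a finite signed measure on ℝᵈ with finite (2−γ)-Riesz energy, then ∫_{ℝᵈ}∫_{ℝᵈ} K_{γ,C}(x − y) d|φ|(x) d|φ|(y) < ∞. -/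
open MeasureTheory Filter Topology Pointwise
open scoped ENNReal NNReal

noncomputable def rieszKernel (d : ℕ) (γ : ℝ) (C : Set (EuclideanSpace ℝ (Fin d)))
    (x : EuclideanSpace ℝ (Fin d)) : ℝ≥0∞ :=
  ∫⁻ v in Set.Ioi (0:ℝ),
    volume (((v ^ (-(d:ℝ)⁻¹)) • x +ᵥ C) ∩ C) * ENNReal.ofReal (v ^ (-γ))

lemma lint_scale (c : ℝ) (hc : 0 < c) (g : ℝ → ℝ≥0∞) :
    ∫⁻ v in Set.Ioi (0:ℝ), g v = ENNReal.ofReal c * ∫⁻ w in Set.Ioi (0:ℝ), g (c * w) := by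
  have hme : MeasurableEmbedding (fun w : ℝ => c * w) :=
    (Homeomorph.mulLeft₀ c hc.ne').measurableEmbedding
  have hpre : (fun w : ℝ => c * w) ⁻¹' Set.Ioi 0 = Set.Ioi 0 := by
    ext w; simp [Set.mem_Ioi, mul_pos_iff_of_pos_left, hc]
  have hmap : Measure.map (fun w : ℝ => c * w) (volume.restrict (Set.Ioi (0:ℝ)))
      = ENNReal.ofReal c⁻¹ • volume.restrict (Set.Ioi (0:ℝ)) := by
    conv_lhs => rw [← hpre]
    rw [← Measure.restrict_map (measurable_const_mul c) measurableSet_Ioi,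
      Real.map_volume_mul_left hc.ne', Measure.restrict_smul,
      abs_of_nonneg (inv_nonneg.mpr hc.le)]
  have h2 : ∫⁻ w in Set.Ioi (0:ℝ), g (c * w)
      = ENNReal.ofReal c⁻¹ * ∫⁻ v in Set.Ioi (0:ℝ), g v := by
    rw [← hme.lintegral_map, hmap, lintegral_smul_measure, smul_eq_mul]
  rw [h2, ← mul_assoc, ← ENNReal.ofReal_mul hc.le, mul_inv_cancel₀ hc.ne',
    ENNReal.ofReal_one, one_mul]

lemma rieszKernel_smul (d : ℕ) (hd : 0 < d) (γ : ℝ) (C : Set (EuclideanSpace ℝ (Fin d)))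
    (u : EuclideanSpace ℝ (Fin d)) (r : ℝ) (hr : 0 < r) :
    rieszKernel d γ C (r • u)
      = ENNReal.ofReal (r ^ (-(γ - 1) * (d:ℝ))) * rieszKernel d γ C u := by
  have hd' : (d:ℝ) ≠ 0 := Nat.cast_ne_zero.mpr hd.ne'
  have hc : (0:ℝ) < r ^ (d:ℝ) := Real.rpow_pos_of_pos hr _
  rw [rieszKernel, lint_scale (r ^ (d:ℝ)) hc]
  have key : ∀ w ∈ Set.Ioi (0:ℝ),
      volume ((((r ^ (d:ℝ) * w) ^ (-(d:ℝ)⁻¹)) • (r • u) +ᵥ C) ∩ C)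
          * ENNReal.ofReal ((r ^ (d:ℝ) * w) ^ (-γ))
        = ENNReal.ofReal (r ^ ((d:ℝ) * (-γ)))
          * (volume (((w ^ (-(d:ℝ)⁻¹)) • u +ᵥ C) ∩ C) * ENNReal.ofReal (w ^ (-γ))) := by
    intro w hw
    have hw' : (0:ℝ) < w := hw
    have h1 : (r ^ (d:ℝ) * w) ^ (-(d:ℝ)⁻¹) = r⁻¹ * w ^ (-(d:ℝ)⁻¹) := by
      rw [Real.mul_rpow hc.le hw'.le, ← Real.rpow_mul hr.le, mul_neg,
        mul_inv_cancel₀ hd', Real.rpow_neg_one]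
    have h2 : ((r ^ (d:ℝ) * w) ^ (-(d:ℝ)⁻¹)) • (r • u) = (w ^ (-(d:ℝ)⁻¹)) • u := by
      rw [h1, smul_smul, mul_comm r⁻¹ _, mul_assoc, inv_mul_cancel₀ hr.ne', mul_one]
    have h3 : (r ^ (d:ℝ) * w) ^ (-γ) = r ^ ((d:ℝ) * (-γ)) * w ^ (-γ) := by
      rw [Real.mul_rpow hc.le hw'.le, ← Real.rpow_mul hr.le]
    rw [h2, h3, ENNReal.ofReal_mul (Real.rpow_nonneg hr.le _)]
    ring
  rw [setLIntegral_congr_fun_ae measurableSet_Ioi (MeasureTheory.ae_of_all _ key),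
    lintegral_const_mul' _ _ ENNReal.ofReal_ne_top, ← mul_assoc,
    ← ENNReal.ofReal_mul (Real.rpow_nonneg hr.le _), ← Real.rpow_add hr, rieszKernel]
  norm_num
  ring_nf

lemma rieszKernel_mono (d : ℕ) (γ : ℝ) {C D : Set (EuclideanSpace ℝ (Fin d))}
    (h : C ⊆ D) (x : EuclideanSpace ℝ (Fin d)) :
    rieszKernel d γ C x ≤ rieszKernel d γ D x := by
  refine lintegral_mono fun v => mul_le_mul_left (measure_mono ?_) _
  exact Set.inter_subset_inter (Set.vadd_set_mono h) h

lemma rieszKernel_ball_rot (d : ℕ) (γ a : ℝ)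
    (u e : EuclideanSpace ℝ (Fin d)) (hu : ‖u‖ = 1) (he : ‖e‖ = 1) :
    rieszKernel d γ (Metric.ball 0 a) u = rieszKernel d γ (Metric.ball 0 a) e := by
  set f := Submodule.reflection (ℝ ∙ (e - u))ᗮ with hf
  have hfe : f e = u := Submodule.reflection_sub (by rw [hu, he])
  have hball : ∀ z : EuclideanSpace ℝ (Fin d), f ⁻¹' Metric.ball z a = Metric.ball (f.symm z) a := by
    intro z
    ext y
    simp only [Set.mem_preimage, Metric.mem_ball, dist_eq_norm]
    rw [← f.norm_map (y - f.symm z), map_sub, f.apply_symm_apply]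
  have key : ∀ z : EuclideanSpace ℝ (Fin d),
      volume ((f z +ᵥ Metric.ball (0:EuclideanSpace ℝ (Fin d)) a) ∩ Metric.ball 0 a)
        = volume ((z +ᵥ Metric.ball (0:EuclideanSpace ℝ (Fin d)) a) ∩ Metric.ball 0 a) := by
    intro z
    have h1 : (f z +ᵥ Metric.ball (0:EuclideanSpace ℝ (Fin d)) a) = Metric.ball (f z) a := by
      rw [Metric.vadd_ball, vadd_eq_add, add_zero]
    have h2 : (z +ᵥ Metric.ball (0:EuclideanSpace ℝ (Fin d)) a) = Metric.ball z a := by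
      rw [Metric.vadd_ball, vadd_eq_add, add_zero]
    rw [h1, h2, ← f.measurePreserving.measure_preimage
      (measurableSet_ball.inter measurableSet_ball).nullMeasurableSet,
      Set.preimage_inter, hball, hball, f.symm_apply_apply, map_zero]
  rw [← hfe, rieszKernel, rieszKernel]
  refine lintegral_congr fun v => ?_
  rw [← LinearIsometryEquiv.map_smul, key]

lemma rieszKernel_ball_lt_top (d : ℕ) (hd : 0 < d) (γ : ℝ) (hγ1 : 1 < γ)
    (a : ℝ) (ha : 0 < a) (e : EuclideanSpace ℝ (Fin d)) (he : ‖e‖ = 1) :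
    rieszKernel d γ (Metric.ball (0 : EuclideanSpace ℝ (Fin d)) a) e < ⊤ := by
  have h2a : (0:ℝ) < 2 * a := by linarith
  set T : ℝ := (2 * a) ^ (-(d:ℝ)) with hT
  have hT0 : 0 < T := Real.rpow_pos_of_pos h2a _
  rw [rieszKernel, ← Set.Ioc_union_Ioi_eq_Ioi hT0.le,
    lintegral_union measurableSet_Ioi (Set.Ioc_disjoint_Ioi le_rfl)]
  have hzero : ∫⁻ v in Set.Ioc (0:ℝ) T,
      volume (((v ^ (-(d:ℝ)⁻¹)) • e +ᵥ Metric.ball (0:EuclideanSpace ℝ (Fin d)) a)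
        ∩ Metric.ball 0 a) * ENNReal.ofReal (v ^ (-γ)) = 0 := by
    rw [setLIntegral_congr_fun_ae measurableSet_Ioc (MeasureTheory.ae_of_all _
      (fun v hv => ?_)), lintegral_zero]
    have hv0 : (0:ℝ) < v := hv.1
    have hd' : (d:ℝ) ≠ 0 := Nat.cast_ne_zero.mpr hd.ne'
    have hc : 2 * a ≤ v ^ (-(d:ℝ)⁻¹) := by
      have hz : (-(d:ℝ)⁻¹) ≤ 0 := neg_nonpos.mpr (by positivity)
      have h := Real.rpow_le_rpow_of_nonpos hv0 hv.2 hz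
      rwa [hT, ← Real.rpow_mul h2a.le, neg_mul_neg, mul_inv_cancel₀ hd',
        Real.rpow_one] at h
    have hempty : ((v ^ (-(d:ℝ)⁻¹)) • e +ᵥ Metric.ball (0:EuclideanSpace ℝ (Fin d)) a)
        ∩ Metric.ball 0 a = ∅ := by
      rw [Set.eq_empty_iff_forall_notMem]
      rintro y ⟨⟨b, hb, rfl⟩, hy2⟩
      rw [Metric.mem_ball, dist_zero_right] at hb
      simp only [vadd_eq_add, Metric.mem_ball, dist_zero_right] at hy2
      have hn : ‖(v ^ (-(d:ℝ)⁻¹)) • e‖ = v ^ (-(d:ℝ)⁻¹) := by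
        rw [norm_smul, he, mul_one, Real.norm_eq_abs,
          abs_of_pos (Real.rpow_pos_of_pos hv0 _)]
      have : v ^ (-(d:ℝ)⁻¹) ≤ ‖(v ^ (-(d:ℝ)⁻¹)) • e + b‖ + ‖b‖ := by
        calc v ^ (-(d:ℝ)⁻¹) = ‖(v ^ (-(d:ℝ)⁻¹)) • e‖ := hn.symm
          _ = ‖((v ^ (-(d:ℝ)⁻¹)) • e + b) + (-b)‖ := by rw [add_neg_cancel_right]
          _ ≤ ‖(v ^ (-(d:ℝ)⁻¹)) • e + b‖ + ‖-b‖ := norm_add_le _ _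
          _ = ‖(v ^ (-(d:ℝ)⁻¹)) • e + b‖ + ‖b‖ := by rw [norm_neg]
      linarith
    rw [hempty]
    simp
  rw [hzero, zero_add]
  have hle : ∫⁻ v in Set.Ioi T,
      volume (((v ^ (-(d:ℝ)⁻¹)) • e +ᵥ Metric.ball (0:EuclideanSpace ℝ (Fin d)) a)
        ∩ Metric.ball 0 a) * ENNReal.ofReal (v ^ (-γ))
      ≤ volume (Metric.ball (0:EuclideanSpace ℝ (Fin d)) a)
        * ∫⁻ v in Set.Ioi T, ENNReal.ofReal (v ^ (-γ)) := by
    rw [← lintegral_const_mul' _ _ measure_ball_lt_top.ne]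
    exact lintegral_mono fun v => mul_le_mul_left
      (measure_mono Set.inter_subset_right) _
  refine lt_of_le_of_lt hle (ENNReal.mul_lt_top measure_ball_lt_top ?_)
  have hint : IntegrableOn (fun v : ℝ => v ^ (-γ)) (Set.Ioi T) :=
    integrableOn_Ioi_rpow_of_lt (by linarith) hT0
  have := hint.2
  rw [HasFiniteIntegral] at this
  refine lt_of_le_of_lt (le_of_eq ?_) this
  refine setLIntegral_congr_fun_ae measurableSet_Ioi (MeasureTheory.ae_of_all _
    (fun v hv => ?_))
  rw [← ofReal_norm, Real.norm_eq_abs,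
    abs_of_pos (Real.rpow_pos_of_pos (hT0.trans hv) _)]

theorem rieszKernel_bound_and_energy_finite
    (d : ℕ) (hd : 0 < d)
    (C : Set (EuclideanSpace ℝ (Fin d)))
    (hCm : MeasurableSet C) (hCb : Bornology.IsBounded C)
    (γ : ℝ) (hγ1 : 1 < γ) (hγ2 : γ < 2)
    (a : ℝ) (ha : 0 < a)
    (hCa : C ⊆ Metric.ball (0 : EuclideanSpace ℝ (Fin d)) a) :
    (∀ e₁ : EuclideanSpace ℝ (Fin d), ‖e₁‖ = 1 →
      rieszKernel d γ (Metric.ball (0 : EuclideanSpace ℝ (Fin d)) a) e₁ < ⊤ ∧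
      ∀ x : EuclideanSpace ℝ (Fin d), x ≠ 0 →
        rieszKernel d γ C x ≤
          rieszKernel d γ (Metric.ball (0 : EuclideanSpace ℝ (Fin d)) a) e₁ *
            ENNReal.ofReal (‖x‖ ^ (-(γ - 1) * (d:ℝ)))) ∧
    (∀ φ : MeasureTheory.SignedMeasure (EuclideanSpace ℝ (Fin d)),
      (∫⁻ x, ∫⁻ y, (‖x - y‖₊ : ℝ≥0∞) ^ (-(γ - 1) * (d:ℝ))
          ∂φ.totalVariation ∂φ.totalVariation) < ⊤ →
      (∫⁻ x, ∫⁻ y, rieszKernel d γ C (x - y)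
          ∂φ.totalVariation ∂φ.totalVariation) < ⊤) := by
  have part1 : ∀ e₁ : EuclideanSpace ℝ (Fin d), ‖e₁‖ = 1 →
      rieszKernel d γ (Metric.ball (0 : EuclideanSpace ℝ (Fin d)) a) e₁ < ⊤ ∧
      ∀ x : EuclideanSpace ℝ (Fin d), x ≠ 0 →
        rieszKernel d γ C x ≤
          rieszKernel d γ (Metric.ball (0 : EuclideanSpace ℝ (Fin d)) a) e₁ *
            ENNReal.ofReal (‖x‖ ^ (-(γ - 1) * (d:ℝ))) := by
    intro e₁ he₁
    refine ⟨rieszKernel_ball_lt_top d hd γ hγ1 a ha e₁ he₁, fun x hx => ?_⟩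
    have hr : (0:ℝ) < ‖x‖ := norm_pos_iff.mpr hx
    set u : EuclideanSpace ℝ (Fin d) := ‖x‖⁻¹ • x with hu'
    have hu : ‖u‖ = 1 := by
      rw [hu', norm_smul, norm_inv, norm_norm, inv_mul_cancel₀ hr.ne']
    have hxu : x = ‖x‖ • u := by
      rw [hu', smul_smul, mul_inv_cancel₀ hr.ne', one_smul]
    calc rieszKernel d γ C x
        = ENNReal.ofReal (‖x‖ ^ (-(γ - 1) * (d:ℝ))) * rieszKernel d γ C u := by
          conv_lhs => rw [hxu]
          exact rieszKernel_smul d hd γ C u ‖x‖ hr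
      _ ≤ ENNReal.ofReal (‖x‖ ^ (-(γ - 1) * (d:ℝ)))
            * rieszKernel d γ (Metric.ball 0 a) u :=
          mul_le_mul_right (rieszKernel_mono d γ hCa u) _
      _ = ENNReal.ofReal (‖x‖ ^ (-(γ - 1) * (d:ℝ)))
            * rieszKernel d γ (Metric.ball 0 a) e₁ := by
          rw [rieszKernel_ball_rot d γ a u e₁ hu he₁]
      _ = _ := mul_comm _ _
  refine ⟨part1, fun φ hφ => ?_⟩
  set e₁ : EuclideanSpace ℝ (Fin d) := EuclideanSpace.single (⟨0, hd⟩ : Fin d) (1:ℝ) with he₁'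
  have he₁ : ‖e₁‖ = 1 := by rw [he₁', EuclideanSpace.norm_single, norm_one]
  obtain ⟨hfin, hbound⟩ := part1 e₁ he₁
  set M := rieszKernel d γ (Metric.ball (0 : EuclideanSpace ℝ (Fin d)) a) e₁ with hM
  have hM1 : M + 1 ≠ ⊤ := ENNReal.add_ne_top.mpr ⟨hfin.ne, ENNReal.one_ne_top⟩
  have key : ∀ x y : EuclideanSpace ℝ (Fin d),
      rieszKernel d γ C (x - y) ≤ (M + 1) * (‖x - y‖₊ : ℝ≥0∞) ^ (-(γ - 1) * (d:ℝ)) := by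
    intro x y
    rcases eq_or_ne x y with rfl | hxy
    · have hexp : -(γ - 1) * (d:ℝ) < 0 :=
        mul_neg_of_neg_of_pos (by linarith) (by exact_mod_cast hd)
      rw [sub_self, nnnorm_zero, ENNReal.coe_zero, ENNReal.zero_rpow_of_neg hexp,
        ENNReal.mul_top (by simp)]
      exact le_top
    · have hz : x - y ≠ 0 := sub_ne_zero.mpr hxy
      have hzn : (0:ℝ) < ‖x - y‖ := norm_pos_iff.mpr hz
      have h1 := hbound (x - y) hz
      have h2 : ENNReal.ofReal (‖x - y‖ ^ (-(γ - 1) * (d:ℝ)))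
          = (‖x - y‖₊ : ℝ≥0∞) ^ (-(γ - 1) * (d:ℝ)) := by
        rw [← ENNReal.ofReal_coe_nnreal, coe_nnnorm, ← ENNReal.ofReal_rpow_of_pos hzn]
      rw [h2] at h1
      exact h1.trans (mul_le_mul_left le_self_add _)
  calc ∫⁻ x, ∫⁻ y, rieszKernel d γ C (x - y) ∂φ.totalVariation ∂φ.totalVariation
      ≤ ∫⁻ x, ∫⁻ y, (M + 1) * (‖x - y‖₊ : ℝ≥0∞) ^ (-(γ - 1) * (d:ℝ))
          ∂φ.totalVariation ∂φ.totalVariation :=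
        lintegral_mono fun x => lintegral_mono fun y => key x y
    _ = (M + 1) * ∫⁻ x, ∫⁻ y, (‖x - y‖₊ : ℝ≥0∞) ^ (-(γ - 1) * (d:ℝ))
          ∂φ.totalVariation ∂φ.totalVariation := by
        simp_rw [lintegral_const_mul' _ _ hM1]
    _ < ⊤ := ENNReal.mul_lt_top hM1.lt_top hφ
end

section
/- Let C be a bounded measurable subset of ℝᵈ with Lebesgue measure |C| = 1 and let γ ∈ (1,2). Then for every x ∈ ℝᵈ, ∫_{{y ∈ ℝᵈ : |y| > 1}} K_{γ,C}(x − y) dy = ∞. -/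
open MeasureTheory Filter Topology Pointwise
open scoped ENNReal NNReal symmDiff

lemma exists_delta_half (d : ℕ) (C : Set (EuclideanSpace ℝ (Fin d)))
    (hCm : MeasurableSet C) (hC1 : volume C = 1) :
    ∃ δ > (0:ℝ), ∀ a : EuclideanSpace ℝ (Fin d), ‖a‖ < δ →
      (2:ℝ≥0∞)⁻¹ ≤ volume ((a +ᵥ C) ∩ C) := by
  have hcm : ∀ a : EuclideanSpace ℝ (Fin d), Continuous (fun t : EuclideanSpace ℝ (Fin d) => t - a) := fun a => by fun_prop
  set F : EuclideanSpace ℝ (Fin d) → C(EuclideanSpace ℝ (Fin d), EuclideanSpace ℝ (Fin d)) := fun a => ContinuousMap.mk (fun t : EuclideanSpace ℝ (Fin d) => t - a) (hcm a) with hF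
  have hFcont : Continuous F := by
    apply ContinuousMap.continuous_of_continuous_uncurry
    exact continuous_snd.sub continuous_fst
  have hF0 : F 0 = ContinuousMap.id (EuclideanSpace ℝ (Fin d)) := by ext t; simp [hF]
  have hmp : ∀ a : EuclideanSpace ℝ (Fin d), MeasurePreserving (fun t : EuclideanSpace ℝ (Fin d) => t - a) volume volume := by
    intro a
    have h : (fun t : EuclideanSpace ℝ (Fin d) => t - a) = fun t : EuclideanSpace ℝ (Fin d) => t + (-a) := by
      ext t; simp [sub_eq_add_neg]
    rw [h]
    exact ⟨measurable_add_const _, map_add_right_eq_self volume _⟩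
  have htend : Tendsto (fun a : EuclideanSpace ℝ (Fin d) => volume (((F a) ⁻¹' C) ∆ ((ContinuousMap.id (EuclideanSpace ℝ (Fin d))) ⁻¹' C)))
      (𝓝 0) (𝓝 0) := by
    refine tendsto_measure_symmDiff_preimage_nhds_zero ?_ (Eventually.of_forall fun a => hmp a)
      (MeasurePreserving.id _) hCm.nullMeasurableSet (by rw [hC1]; exact ENNReal.one_ne_top)
    rw [← hF0]
    exact hFcont.tendsto 0
  have hev : ∀ᶠ a : EuclideanSpace ℝ (Fin d) in 𝓝 0, volume (((F a) ⁻¹' C) ∆ C) < 2⁻¹ := by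
    have := htend.eventually (eventually_lt_nhds (by simp : (0:ℝ≥0∞) < 2⁻¹))
    simpa using this
  rw [Metric.eventually_nhds_iff] at hev
  obtain ⟨δ, hδpos, hδ⟩ := hev
  refine ⟨δ, hδpos, fun a ha => ?_⟩
  have ha' : dist a 0 < δ := by simpa [dist_zero_right] using ha
  have hsym := (hδ ha').le
  have hpre : (F a) ⁻¹' C = a +ᵥ C := by
    ext t
    simp only [hF, ContinuousMap.coe_mk, Set.mem_preimage,
      Set.mem_vadd_set_iff_neg_vadd_mem, vadd_eq_add]
    rw [neg_add_eq_sub]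
  rw [hpre] at hsym
  have hsub : C ⊆ ((a +ᵥ C) ∩ C) ∪ (C \ (a +ᵥ C)) := by
    intro t ht
    by_cases h : t ∈ a +ᵥ C
    · exact Or.inl ⟨h, ht⟩
    · exact Or.inr ⟨ht, h⟩
  have hdiff : volume (C \ (a +ᵥ C)) ≤ 2⁻¹ := by
    refine le_trans (measure_mono ?_) hsym
    intro t ht
    exact Or.inr ht
  have h1 : (1:ℝ≥0∞) ≤ volume ((a +ᵥ C) ∩ C) + 2⁻¹ := by
    calc (1:ℝ≥0∞) = volume C := hC1.symm
    _ ≤ volume (((a +ᵥ C) ∩ C) ∪ (C \ (a +ᵥ C))) := measure_mono hsub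
    _ ≤ volume ((a +ᵥ C) ∩ C) + volume (C \ (a +ᵥ C)) := measure_union_le _ _
    _ ≤ volume ((a +ᵥ C) ∩ C) + 2⁻¹ := by gcongr
  have h2 : (1:ℝ≥0∞) - 2⁻¹ = 2⁻¹ := by
    rw [← ENNReal.inv_two_add_inv_two, ENNReal.add_sub_cancel_right (by simp)]
  calc (2:ℝ≥0∞)⁻¹ = 1 - 2⁻¹ := h2.symm
  _ ≤ volume ((a +ᵥ C) ∩ C) := tsub_le_iff_right.2 h1

lemma kernel_lower (d : ℕ) (hd : 0 < d) (C : Set (EuclideanSpace ℝ (Fin d)))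
    (γ : ℝ) (hγ1 : 1 < γ)
    (δ : ℝ) (hδpos : 0 < δ)
    (hδ : ∀ a : EuclideanSpace ℝ (Fin d), ‖a‖ < δ → (2:ℝ≥0∞)⁻¹ ≤ volume ((a +ᵥ C) ∩ C))
    (M : ℝ) (hM : δ ≤ M) (z : EuclideanSpace ℝ (Fin d)) (hz : ‖z‖ < M) :
    2⁻¹ * ENNReal.ofReal (-((M/δ) ^ (d:ℝ)) ^ (-γ + 1) / (-γ + 1)) ≤ rieszKernel d γ C z := by
  have hMpos : 0 < M := lt_of_lt_of_le hδpos hM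
  have hq : 0 < M / δ := div_pos hMpos hδpos
  set T : ℝ := (M / δ) ^ (d:ℝ) with hTdef
  have hTpos : 0 < T := Real.rpow_pos_of_pos hq _
  have hdR : (0:ℝ) < d := Nat.cast_pos.2 hd
  have hpt : ∀ v ∈ Set.Ioi T,
      2⁻¹ * ENNReal.ofReal (v ^ (-γ)) ≤
        volume (((v ^ (-(d:ℝ)⁻¹)) • z +ᵥ C) ∩ C) * ENNReal.ofReal (v ^ (-γ)) := by
    intro v hv
    have hvT : T < v := hv
    have hnorm : ‖(v ^ (-(d:ℝ)⁻¹)) • z‖ < δ := by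
      rw [norm_smul, Real.norm_eq_abs,
        abs_of_pos (Real.rpow_pos_of_pos (hTpos.trans hvT) _)]
      have h1 : v ^ (-(d:ℝ)⁻¹) ≤ T ^ (-(d:ℝ)⁻¹) :=
        Real.rpow_le_rpow_of_nonpos hTpos hvT.le (neg_nonpos.2 (inv_nonneg.2 hdR.le))
      have hTc : T ^ (-(d:ℝ)⁻¹) = δ / M := by
        rw [hTdef, ← Real.rpow_mul hq.le, mul_neg, mul_inv_cancel₀ (ne_of_gt hdR),
          Real.rpow_neg_one, inv_div]
      calc v ^ (-(d:ℝ)⁻¹) * ‖z‖ ≤ (δ / M) * ‖z‖ :=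
            mul_le_mul_of_nonneg_right (h1.trans_eq hTc) (norm_nonneg z)
        _ < (δ / M) * M := mul_lt_mul_of_pos_left hz (div_pos hδpos hMpos)
        _ = δ := div_mul_cancel₀ δ (ne_of_gt hMpos)
    exact mul_le_mul_left (hδ _ hnorm) _
  have hnn : (0:ℝ → ℝ) ≤ᶠ[ae (volume.restrict (Set.Ioi T))] fun v : ℝ => v ^ (-γ) :=
    (ae_restrict_iff' measurableSet_Ioi).2 (Eventually.of_forall fun v hv =>
      Real.rpow_nonneg (le_of_lt (hTpos.trans hv)) _)
  calc 2⁻¹ * ENNReal.ofReal (-T ^ (-γ + 1) / (-γ + 1))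
      = ∫⁻ v in Set.Ioi T, 2⁻¹ * ENNReal.ofReal (v ^ (-γ)) := by
        rw [lintegral_const_mul' _ _ (by simp)]
        congr 1
        rw [← ofReal_integral_eq_lintegral_ofReal
          (integrableOn_Ioi_rpow_of_lt (by linarith) hTpos) hnn,
          integral_Ioi_rpow_of_lt (by linarith) hTpos]
    _ ≤ ∫⁻ v in Set.Ioi T,
          volume (((v ^ (-(d:ℝ)⁻¹)) • z +ᵥ C) ∩ C) * ENNReal.ofReal (v ^ (-γ)) :=
        setLIntegral_mono' measurableSet_Ioi hpt
    _ ≤ rieszKernel d γ C z := by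
        rw [rieszKernel]
        exact lintegral_mono_set (Set.Ioi_subset_Ioi hTpos.le)

theorem rieszKernel_tail_integral_infinite
    (d : ℕ) (hd : 0 < d)
    (C : Set (EuclideanSpace ℝ (Fin d)))
    (hCm : MeasurableSet C) (hCb : Bornology.IsBounded C)
    (hC1 : volume C = 1)
    (γ : ℝ) (hγ1 : 1 < γ) (hγ2 : γ < 2)
    (x : EuclideanSpace ℝ (Fin d)) :
    ∫⁻ y in {y : EuclideanSpace ℝ (Fin d) | 1 < ‖y‖},
        rieszKernel d γ C (x - y)
      ∂(volume : Measure (EuclideanSpace ℝ (Fin d))) = ⊤ := by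
  obtain ⟨δ, hδpos, hδ⟩ := exists_delta_half d C hCm hC1
  have hdR : (0:ℝ) < d := Nat.cast_pos.2 hd
  set I := ∫⁻ y in {y : EuclideanSpace ℝ (Fin d) | 1 < ‖y‖},
      rieszKernel d γ C (x - y)
      ∂(volume : Measure (EuclideanSpace ℝ (Fin d))) with hI
  set B := volume (Metric.ball (0 : EuclideanSpace ℝ (Fin d)) 1) with hBdef
  have e : EuclideanSpace ℝ (Fin d) := EuclideanSpace.single ⟨0, hd⟩ 1
  haveI : Nontrivial (EuclideanSpace ℝ (Fin d)) := by
    refine nontrivial_of_ne (EuclideanSpace.single ⟨0, hd⟩ (1:ℝ)) 0 ?_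
    intro h
    have := congrArg norm h
    rw [EuclideanSpace.norm_single] at this
    simp at this
  have hBpos : 0 < B := Metric.measure_ball_pos volume 0 one_pos
  have hBfin : B ≠ ⊤ := measure_ball_lt_top.ne
  -- lower bound for each large M
  have key : ∀ M : ℝ, max δ (3*(1+‖x‖)+3) ≤ M →
      2⁻¹ * ENNReal.ofReal (-((M/δ) ^ (d:ℝ)) ^ (-γ + 1) / (-γ + 1))
        * (ENNReal.ofReal ((M/3) ^ d) * B) ≤ I := by
    intro M hMle
    have hMδ : δ ≤ M := le_trans (le_max_left _ _) hMle
    have hMx : 3*(1+‖x‖)+3 ≤ M := le_trans (le_max_right _ _) hMle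
    have hxnn : (0:ℝ) ≤ ‖x‖ := norm_nonneg x
    have hMpos : 0 < M := by linarith
    set e : EuclideanSpace ℝ (Fin d) := EuclideanSpace.single ⟨0, hd⟩ 1 with he
    have hne : ‖e‖ = 1 := by rw [he, EuclideanSpace.norm_single]; norm_num
    set c : EuclideanSpace ℝ (Fin d) := x + (2*M/3) • e with hc
    have hcx : ‖c - x‖ = 2*M/3 := by
      rw [hc, add_sub_cancel_left, norm_smul, Real.norm_eq_abs, hne, mul_one,
        abs_of_nonneg (by linarith)]
    have hsub : Metric.ball c (M/3) ⊆ {y : EuclideanSpace ℝ (Fin d) | 1 < ‖y‖} := by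
      intro y hy
      have h1 : dist y c < M/3 := Metric.mem_ball.1 hy
      have h2 : ‖c - x‖ ≤ ‖c - y‖ + ‖y - x‖ := by
        have := dist_triangle c y x
        simpa [dist_eq_norm] using this
      have h3 : ‖y - x‖ ≤ ‖y‖ + ‖x‖ := norm_sub_le y x
      have h4 : ‖c - y‖ = dist y c := by rw [dist_eq_norm, norm_sub_rev]
      show 1 < ‖y‖
      rw [hcx] at h2
      linarith
    have hballz : ∀ y ∈ Metric.ball c (M/3), ‖x - y‖ < M := by
      intro y hy
      have h1 : dist y c < M/3 := Metric.mem_ball.1 hy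
      have h2 : dist x y ≤ dist x c + dist c y := dist_triangle x c y
      have h3 : dist x c = 2*M/3 := by rw [dist_eq_norm, norm_sub_rev, hcx]
      have h4 : dist c y = dist y c := dist_comm c y
      have h5 : ‖x - y‖ = dist x y := (dist_eq_norm x y).symm
      linarith
    calc 2⁻¹ * ENNReal.ofReal (-((M/δ) ^ (d:ℝ)) ^ (-γ + 1) / (-γ + 1))
          * (ENNReal.ofReal ((M/3) ^ d) * B)
        = 2⁻¹ * ENNReal.ofReal (-((M/δ) ^ (d:ℝ)) ^ (-γ + 1) / (-γ + 1))
          * volume (Metric.ball c (M/3)) := by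
          rw [Measure.addHaar_ball volume c (by positivity), finrank_euclideanSpace_fin]
      _ = ∫⁻ _ in Metric.ball c (M/3),
            2⁻¹ * ENNReal.ofReal (-((M/δ) ^ (d:ℝ)) ^ (-γ + 1) / (-γ + 1)) := by
          rw [setLIntegral_const]
      _ ≤ ∫⁻ y in Metric.ball c (M/3), rieszKernel d γ C (x - y) :=
          setLIntegral_mono' measurableSet_ball (fun y hy =>
            kernel_lower d hd C γ hγ1 δ hδpos hδ M hMδ (x - y) (hballz y hy))
      _ ≤ I := lintegral_mono_set hsub
  -- the lower bound tends to infinity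
  set p : ℝ := (d:ℝ) * (-γ + 1) with hp
  set c₀ : ℝ := (δ ^ p)⁻¹ / (γ - 1) * ((3:ℝ) ^ d)⁻¹ with hc₀
  have hc₀pos : 0 < c₀ := by
    have h1 : (0:ℝ) < δ ^ p := Real.rpow_pos_of_pos hδpos _
    have h2 : (0:ℝ) < (3:ℝ) ^ d := by positivity
    have h3 : (0:ℝ) < γ - 1 := by linarith
    positivity
  set φ : ℝ → ℝ := fun M => (-((M/δ) ^ (d:ℝ)) ^ (-γ + 1) / (-γ + 1)) * ((M/3) ^ d) with hφ
  have hev : φ =ᶠ[atTop] fun M => M ^ ((d:ℝ) * (2 - γ)) * c₀ := by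
    filter_upwards [eventually_gt_atTop 0] with M hM0
    have hq : 0 < M / δ := div_pos hM0 hδpos
    have h1 : ((M/δ) ^ (d:ℝ)) ^ (-γ + 1) = M ^ p / δ ^ p := by
      rw [← Real.rpow_mul hq.le, ← hp, Real.div_rpow hM0.le hδpos.le]
    have h2 : ((M/3:ℝ)) ^ d = M ^ ((d:ℝ)) / 3 ^ d := by
      rw [div_pow, Real.rpow_natCast]
    have h3 : M ^ p * M ^ ((d:ℝ)) = M ^ ((d:ℝ) * (2 - γ)) := by
      rw [← Real.rpow_add hM0]
      congr 1
      rw [hp]; ring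
    rw [hφ]
    simp only
    rw [h1, h2, ← h3, hc₀]
    have hδp : δ ^ p ≠ 0 := (Real.rpow_pos_of_pos hδpos _).ne'
    have h3d : ((3:ℝ) ^ d) ≠ 0 := by positivity
    have hγ1' : -γ + 1 ≠ 0 := by intro h; apply absurd hγ1; linarith
    have hγ1'' : γ - 1 ≠ 0 := by intro h; apply absurd hγ1; linarith
    field_simp
    ring
  have hφtend : Tendsto φ atTop atTop := by
    refine Tendsto.congr' hev.symm ?_
    exact (tendsto_rpow_atTop (by nlinarith)).atTop_mul_const hc₀pos
  have hconst_ne : (2:ℝ≥0∞)⁻¹ * B ≠ 0 := by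
    refine mul_ne_zero (by simp) hBpos.ne'
  have hGtend : Tendsto (fun M : ℝ => ENNReal.ofReal (φ M) * (2⁻¹ * B)) atTop (𝓝 ⊤) := by
    have h := ENNReal.Tendsto.mul_const (ENNReal.tendsto_ofReal_atTop.comp hφtend)
      (b := 2⁻¹ * B) (Or.inl ENNReal.top_ne_zero)
    rwa [ENNReal.top_mul hconst_ne] at h
  have hle : ∀ᶠ M : ℝ in atTop, ENNReal.ofReal (φ M) * (2⁻¹ * B) ≤ I := by
    filter_upwards [eventually_ge_atTop (max δ (3*(1+‖x‖)+3))] with M hM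
    have hMδ : δ ≤ M := le_trans (le_max_left _ _) hM
    have hMpos : 0 < M := lt_of_lt_of_le hδpos hMδ
    have hh1 : 0 ≤ -((M/δ) ^ (d:ℝ)) ^ (-γ + 1) / (-γ + 1) := by
      refine div_nonneg_iff.2 (Or.inr ⟨?_, by linarith⟩)
      have : (0:ℝ) ≤ ((M/δ) ^ (d:ℝ)) ^ (-γ + 1) :=
        Real.rpow_nonneg (Real.rpow_nonneg (div_nonneg hMpos.le hδpos.le) _) _
      linarith
    have heq : ENNReal.ofReal (φ M) * (2⁻¹ * B)
        = 2⁻¹ * ENNReal.ofReal (-((M/δ) ^ (d:ℝ)) ^ (-γ + 1) / (-γ + 1))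
          * (ENNReal.ofReal ((M/3) ^ d) * B) := by
      rw [hφ]
      simp only
      rw [ENNReal.ofReal_mul hh1]
      ring
    rw [heq]
    exact key M hM
  exact eq_top_iff.2 (le_of_tendsto hGtend hle)
end
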